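/- Let d' ≥ 1, c₃ > 0, and θ ≥ 0 with eigenvalue lower bound λ_i ≥ c (i)^{2/d'} for all i ≥ 1 and some c > 0. Then there exists a constant C > 0 such that for all r ∈ (0,1], ∑_{i=1}^∞ λ_i^{-θ} e^{-λ_i r} ≤ C ( r^{-(d'/2 - θ)⁺} + 1_{d'/2 = θ} log(1 + r^{-1}) ). -/

import Mathlib

open Set MeasureTheory

lemma aux_sum_le_integral (f : ℝ → ℝ) (h0 : ∀ x : ℝ, 1 ≤ x → 0 ≤ f x)
    (ha : ∀ x y : ℝ, 1 ≤ x → x ≤ y → f y ≤ f x)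
    (hi : IntegrableOn f (Set.Ioi (1:ℝ))) :
    Summable (fun i : ℕ => f (i+1)) ∧
      (∑' i : ℕ, f (i+1)) ≤ f 1 + ∫ x in Set.Ioi (1:ℝ), f x := by
  set s : ℕ → Set ℝ := fun i => Ioc ((i:ℝ)+1) ((i:ℝ)+2) with hs
  have hmeas : ∀ i, MeasurableSet (s i) := fun i => measurableSet_Ioc
  have hdisj : Pairwise (Function.onFun Disjoint s) := by
    intro i j hij
    simp only [Function.onFun, Set.disjoint_left, hs]
    intro x hx1 hx2
    rcases hij.lt_or_gt with h | h
    · have : (i:ℝ) + 1 ≤ j := by exact_mod_cast h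
      have := hx1.2; have := hx2.1; simp only [mem_Ioc] at *; linarith
    · have : (j:ℝ) + 1 ≤ i := by exact_mod_cast h
      have := hx1.1; have := hx2.2; simp only [mem_Ioc] at *; linarith
  have hunion : (⋃ i, s i) = Set.Ioi (1:ℝ) := by
    ext x
    simp only [hs, mem_iUnion, mem_Ioc, mem_Ioi]
    constructor
    · rintro ⟨i, h1, _⟩
      have : (0:ℝ) ≤ i := Nat.cast_nonneg i
      linarith
    · intro hx
      have hx0 : (0:ℝ) ≤ x := by linarith
      have h2 : 2 ≤ ⌈x⌉₊ := by
        by_contra hcon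
        push_neg at hcon
        have h1 : (⌈x⌉₊:ℝ) ≤ 1 := by exact_mod_cast Nat.lt_succ_iff.mp hcon
        have := Nat.le_ceil x
        linarith
      refine ⟨⌈x⌉₊ - 2, ?_, ?_⟩
      · have hcast : ((⌈x⌉₊ - 2 : ℕ) : ℝ) = (⌈x⌉₊ : ℝ) - 2 := by
          push_cast [h2]; ring
        rw [hcast]
        have := Nat.ceil_lt_add_one hx0
        linarith
      · have hcast : ((⌈x⌉₊ - 2 : ℕ) : ℝ) = (⌈x⌉₊ : ℝ) - 2 := by
          push_cast [h2]; ring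
        rw [hcast]
        have := Nat.le_ceil x
        linarith
  have hii : ∀ i, IntegrableOn f (s i) := by
    intro i
    apply hi.mono_set
    intro x hx
    have : (0:ℝ) ≤ i := Nat.cast_nonneg i
    have := hx.1
    simp only [mem_Ioi]
    linarith
  have hint : ∀ i : ℕ, f ((i:ℝ)+2) ≤ ∫ x in s i, f x := by
    intro i
    have hvol : (volume (s i)).toReal = 1 := by
      simp only [hs, Real.volume_Ioc]
      rw [show (i:ℝ)+2-((i:ℝ)+1) = 1 by ring]
      simp
    have := setIntegral_ge_of_const_le (c := f ((i:ℝ)+2)) (hmeas i)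
      (by simp only [hs]; exact (measure_Ioc_lt_top).ne)
      (fun x hx => by
        have h1 : (1:ℝ) ≤ x := by
          have : (0:ℝ) ≤ i := Nat.cast_nonneg i
          have := hx.1; linarith
        exact ha x _ h1 hx.2) (hii i)
    rw [measureReal_def, hvol, one_smul] at this
    exact this
  have hsum : HasSum (fun i : ℕ => ∫ x in s i, f x) (∫ x in Set.Ioi (1:ℝ), f x) := by
    have := hasSum_integral_iUnion (μ := volume) (f := f) hmeas hdisj (by rw [hunion]; exact hi)
    rwa [hunion] at this
  have hS2 : Summable (fun i : ℕ => f ((i:ℝ)+2)) := by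
    apply Summable.of_nonneg_of_le (fun i => h0 _ (by
      have : (0:ℝ) ≤ i := Nat.cast_nonneg i; linarith)) hint hsum.summable
  have hF : Summable (fun i : ℕ => f (i+1)) := by
    rw [← summable_nat_add_iff 1]
    convert hS2 using 2 with i
    · rfl
    push_cast; ring_nf
  refine ⟨hF, ?_⟩
  rw [Summable.tsum_eq_zero_add hF]
  have e1 : ((0:ℕ) + 1 : ℝ) = 1 := by norm_num
  have step : (∑' i : ℕ, f ((i:ℕ) + 1 + 1)) ≤ ∫ x in Set.Ioi (1:ℝ), f x := by
    have heq : (fun i : ℕ => f ((i:ℕ) + 1 + 1)) = fun i : ℕ => f ((i:ℝ)+2) := by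
      funext i; push_cast; ring_nf
    rw [heq, ← hsum.tsum_eq]
    exact Summable.tsum_le_tsum hint hS2 hsum.summable
  simp only [Nat.cast_add, Nat.cast_one, Nat.cast_zero] at *
  norm_num
  linarith [step]

lemma aux_integrable {p q b : ℝ} (hp : 0 < p) (hq : -1 < q) (hb : 0 < b) :
    IntegrableOn (fun x : ℝ => x ^ q * Real.exp (-b * x ^ p)) (Set.Ioi (0:ℝ)) := by
  by_contra h
  have hval := integral_rpow_mul_exp_neg_mul_rpow hp hq hb
  rw [MeasureTheory.integral_undef h] at hval
  have hpos : 0 < b ^ (-(q + 1) / p) * (1 / p) * Real.Gamma ((q + 1) / p) := by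
    have := Real.Gamma_pos_of_pos (div_pos (by linarith : (0:ℝ) < q + 1) hp)
    positivity
  rw [← hval] at hpos
  exact lt_irrefl _ hpos

lemma aux_key (d' c θ : ℝ) (hd0 : 0 < d') (hc : 0 < c) (hθ : 0 ≤ θ)
    (lam : ℕ → ℝ) (hpos : ∀ i : ℕ, 1 ≤ i → 0 < lam i)
    (hlow : ∀ i : ℕ, 1 ≤ i → c * (i : ℝ) ^ (2/d') ≤ lam i)
    (r : ℝ) (hr : 0 < r)
    (hInt : IntegrableOn (fun x : ℝ => x ^ (-(2*θ/d')) * Real.exp (-(c*r) * x ^ (2/d')))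
      (Set.Ioi (1:ℝ))) :
    (∑' i : ℕ, lam (i+1) ^ (-θ) * Real.exp (-(lam (i+1) * r)))
      ≤ c ^ (-θ) * (1 + ∫ x in Set.Ioi (1:ℝ),
          x ^ (-(2*θ/d')) * Real.exp (-(c*r) * x ^ (2/d'))) := by
  set f : ℝ → ℝ := fun x => x ^ (-(2*θ/d')) * Real.exp (-(c*r) * x ^ (2/d')) with hfdef
  have hexp : 0 ≤ 2*θ/d' := by positivity
  have h0 : ∀ x : ℝ, 1 ≤ x → 0 ≤ f x := by
    intro x hx
    have hx0 : 0 < x := by linarith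
    simp only [hfdef]
    positivity
  have ha : ∀ x y : ℝ, 1 ≤ x → x ≤ y → f y ≤ f x := by
    intro x y hx hxy
    have hx0 : 0 < x := by linarith
    simp only [hfdef]
    apply mul_le_mul
    · exact Real.rpow_le_rpow_of_nonpos hx0 hxy (neg_nonpos.mpr hexp)
    · apply Real.exp_le_exp.mpr
      have h1 : x ^ (2/d') ≤ y ^ (2/d') :=
        Real.rpow_le_rpow hx0.le hxy (by positivity)
      have h2 := mul_le_mul_of_nonneg_left h1 (show 0 ≤ c*r by positivity)
      linarith
    · exact (Real.exp_pos _).le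
    · exact Real.rpow_nonneg hx0.le _
  obtain ⟨hsumf, hle⟩ := aux_sum_le_integral f h0 ha hInt
  have htw : ∀ i : ℕ, lam (i+1) ^ (-θ) * Real.exp (-(lam (i+1) * r))
      ≤ c ^ (-θ) * f ((i:ℝ)+1) := by
    intro i
    have hi1 : (1:ℕ) ≤ i + 1 := Nat.le_add_left 1 i
    have hx1 : (1:ℝ) ≤ (i:ℝ)+1 := by
      have : (0:ℝ) ≤ i := Nat.cast_nonneg i
      linarith
    have hx0 : (0:ℝ) < (i:ℝ)+1 := by linarith
    have hlow' : c * ((i:ℝ)+1) ^ (2/d') ≤ lam (i+1) := by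
      have := hlow (i+1) hi1
      push_cast at this
      exact this
    have hcx : 0 < c * ((i:ℝ)+1) ^ (2/d') := by positivity
    have hA : lam (i+1) ^ (-θ) ≤ (c * ((i:ℝ)+1) ^ (2/d')) ^ (-θ) :=
      Real.rpow_le_rpow_of_nonpos hcx hlow' (neg_nonpos.mpr hθ)
    have hA2 : (c * ((i:ℝ)+1) ^ (2/d')) ^ (-θ)
        = c ^ (-θ) * ((i:ℝ)+1) ^ (-(2*θ/d')) := by
      rw [Real.mul_rpow hc.le (Real.rpow_nonneg hx0.le _),
        ← Real.rpow_mul hx0.le]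
      congr 1
      ring
    have hB : Real.exp (-(lam (i+1) * r)) ≤ Real.exp (-(c*r) * ((i:ℝ)+1) ^ (2/d')) := by
      apply Real.exp_le_exp.mpr
      have h2 := mul_le_mul_of_nonneg_right hlow' hr.le
      have h3 : -(c*r) * ((i:ℝ)+1) ^ (2/d') = -(c * ((i:ℝ)+1) ^ (2/d') * r) := by ring
      rw [h3]
      linarith
    calc lam (i+1) ^ (-θ) * Real.exp (-(lam (i+1) * r))
        ≤ (c * ((i:ℝ)+1) ^ (2/d')) ^ (-θ) * Real.exp (-(c*r) * ((i:ℝ)+1) ^ (2/d')) := by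
          apply mul_le_mul hA hB (Real.exp_pos _).le (Real.rpow_nonneg hcx.le _)
      _ = c ^ (-θ) * f ((i:ℝ)+1) := by rw [hA2, hfdef]; ring
  have hsum2 : Summable (fun i : ℕ => c ^ (-θ) * f ((i:ℝ)+1)) := hsumf.mul_left _
  have hsum0 : Summable (fun i : ℕ => lam (i+1) ^ (-θ) * Real.exp (-(lam (i+1) * r))) := by
    apply Summable.of_nonneg_of_le _ htw hsum2
    intro i
    exact mul_nonneg (Real.rpow_nonneg (hpos _ (Nat.le_add_left 1 i)).le _) (Real.exp_pos _).le
  have hf1 : f 1 ≤ 1 := by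
    simp only [hfdef, Real.one_rpow, one_mul, mul_one]
    exact Real.exp_le_one_iff.mpr (neg_nonpos.mpr (by positivity))
  calc (∑' i : ℕ, lam (i+1) ^ (-θ) * Real.exp (-(lam (i+1) * r)))
      ≤ ∑' i : ℕ, c ^ (-θ) * f ((i:ℝ)+1) := Summable.tsum_le_tsum htw hsum0 hsum2
    _ = c ^ (-θ) * ∑' i : ℕ, f ((i:ℝ)+1) := tsum_mul_left
    _ ≤ c ^ (-θ) * (f 1 + ∫ x in Set.Ioi (1:ℝ), f x) := by
        apply mul_le_mul_of_nonneg_left hle (Real.rpow_nonneg hc.le _)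
    _ ≤ c ^ (-θ) * (1 + ∫ x in Set.Ioi (1:ℝ), f x) := by
        apply mul_le_mul_of_nonneg_left _ (Real.rpow_nonneg hc.le _)
        linarith

set_option maxHeartbeats 1000000 in
lemma aux_caseA (d' c θ : ℝ) (hd' : 1 ≤ d') (hc : 0 < c) (hθ : 0 ≤ θ)
    (lam : ℕ → ℝ) (hpos : ∀ i : ℕ, 1 ≤ i → 0 < lam i)
    (hlow : ∀ i : ℕ, 1 ≤ i → c * (i : ℝ) ^ (2/d') ≤ lam i)
    (hcase : θ < d'/2) :
    ∃ C : ℝ, 0 < C ∧ ∀ r : ℝ, 0 < r → r ≤ 1 →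
      (∑' i : ℕ, lam (i+1) ^ (-θ) * Real.exp (-(lam (i+1) * r)))
        ≤ C * (r ^ (-(max (d'/2 - θ) 0)) +
            (if d'/2 = θ then Real.log (1 + r⁻¹) else 0)) := by
  have hd0 : (0:ℝ) < d' := by linarith
  have hq : (0:ℝ) < 2/d' := by positivity
  have hα : (0:ℝ) < d'/2 - θ := by linarith
  have hqgt : (-1:ℝ) < -(2*θ/d') := by
    have : 2*θ/d' < 1 := by rw [div_lt_one hd0]; linarith
    linarith
  have hexp_eq : (-(2*θ/d') + 1) / (2/d') = d'/2 - θ := by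
    field_simp
    ring
  set K : ℝ := c ^ (-(d'/2 - θ)) * (1/(2/d')) * Real.Gamma (d'/2 - θ) with hKdef
  have hΓ : 0 < Real.Gamma (d'/2 - θ) := Real.Gamma_pos_of_pos hα
  have hK : 0 < K := by rw [hKdef]; positivity
  refine ⟨c ^ (-θ) * (1 + K), by positivity, ?_⟩
  intro r hr hr1
  have hb : 0 < c * r := mul_pos hc hr
  have hInt0 : IntegrableOn
      (fun x : ℝ => x ^ (-(2*θ/d')) * Real.exp (-(c*r) * x ^ (2/d'))) (Set.Ioi 0) :=
    aux_integrable hq hqgt hb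
  have hInt1 : IntegrableOn
      (fun x : ℝ => x ^ (-(2*θ/d')) * Real.exp (-(c*r) * x ^ (2/d'))) (Set.Ioi 1) :=
    hInt0.mono_set (Ioi_subset_Ioi zero_le_one)
  have hkey := aux_key d' c θ hd0 hc hθ lam hpos hlow r hr hInt1
  have hIval := integral_rpow_mul_exp_neg_mul_rpow hq hqgt hb
  rw [hexp_eq] at hIval
  have hexp_eq2 : -(-(2*θ/d') + 1) / (2/d') = -(d'/2 - θ) := by
    field_simp
    ring
  rw [hexp_eq2] at hIval
  have hnn : (fun _ : ℝ => (0:ℝ)) ≤ᵐ[volume.restrict (Set.Ioi 0)]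
      fun x : ℝ => x ^ (-(2*θ/d')) * Real.exp (-(c*r) * x ^ (2/d')) := by
    filter_upwards [ae_restrict_mem measurableSet_Ioi] with x hx
    have hx0 : (0:ℝ) < x := hx
    positivity
  have hmono2 : (∫ x in Set.Ioi (1:ℝ), x ^ (-(2*θ/d')) * Real.exp (-(c*r) * x ^ (2/d')))
      ≤ ∫ x in Set.Ioi (0:ℝ), x ^ (-(2*θ/d')) * Real.exp (-(c*r) * x ^ (2/d')) :=
    setIntegral_mono_set hInt0 hnn
      (HasSubset.Subset.eventuallyLE (Ioi_subset_Ioi zero_le_one))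
  have hcr : (c*r) ^ (-(d'/2 - θ)) = c ^ (-(d'/2 - θ)) * r ^ (-(d'/2 - θ)) :=
    Real.mul_rpow hc.le hr.le
  have hr1' : (1:ℝ) ≤ r ^ (-(d'/2 - θ)) :=
    Real.one_le_rpow_of_pos_of_le_one_of_nonpos hr hr1 (by linarith)
  rw [max_eq_left hα.le, if_neg (show ¬ d'/2 = θ by intro h; linarith), add_zero]
  have hIub : (∫ x in Set.Ioi (1:ℝ), x ^ (-(2*θ/d')) * Real.exp (-(c*r) * x ^ (2/d')))
      ≤ K * r ^ (-(d'/2 - θ)) := by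
    rw [hKdef]
    calc (∫ x in Set.Ioi (1:ℝ), x ^ (-(2*θ/d')) * Real.exp (-(c*r) * x ^ (2/d')))
        ≤ ∫ x in Set.Ioi (0:ℝ), x ^ (-(2*θ/d')) * Real.exp (-(c*r) * x ^ (2/d')) := hmono2
      _ = (c*r) ^ (-(d'/2 - θ)) * (1/(2/d')) * Real.Gamma (d'/2 - θ) := hIval
      _ = c ^ (-(d'/2 - θ)) * (1/(2/d')) * Real.Gamma (d'/2 - θ) * r ^ (-(d'/2 - θ)) := by
          rw [hcr]; ring
  calc (∑' i : ℕ, lam (i+1) ^ (-θ) * Real.exp (-(lam (i+1) * r)))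
      ≤ c ^ (-θ) * (1 + ∫ x in Set.Ioi (1:ℝ),
          x ^ (-(2*θ/d')) * Real.exp (-(c*r) * x ^ (2/d'))) := hkey
    _ ≤ c ^ (-θ) * (1 + K * r ^ (-(d'/2 - θ))) := by
        apply mul_le_mul_of_nonneg_left _ (Real.rpow_nonneg hc.le _)
        linarith
    _ ≤ c ^ (-θ) * (1 + K) * r ^ (-(d'/2 - θ)) := by
        have h1 : c ^ (-θ) * (1 + K * r ^ (-(d'/2 - θ)))
            = c ^ (-θ) * 1 + c ^ (-θ) * K * r ^ (-(d'/2 - θ)) := by ring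
        have h2 : c ^ (-θ) * (1 + K) * r ^ (-(d'/2 - θ))
            = c ^ (-θ) * r ^ (-(d'/2 - θ)) + c ^ (-θ) * K * r ^ (-(d'/2 - θ)) := by ring
        rw [h1, h2]
        have h3 : 0 < c ^ (-θ) := Real.rpow_pos_of_pos hc _
        nlinarith

set_option maxHeartbeats 1000000 in
lemma aux_caseC (d' c θ : ℝ) (hd' : 1 ≤ d') (hc : 0 < c) (hθ : 0 ≤ θ)
    (lam : ℕ → ℝ) (hpos : ∀ i : ℕ, 1 ≤ i → 0 < lam i)
    (hlow : ∀ i : ℕ, 1 ≤ i → c * (i : ℝ) ^ (2/d') ≤ lam i)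
    (hcase : θ = d'/2) :
    ∃ C : ℝ, 0 < C ∧ ∀ r : ℝ, 0 < r → r ≤ 1 →
      (∑' i : ℕ, lam (i+1) ^ (-θ) * Real.exp (-(lam (i+1) * r)))
        ≤ C * (r ^ (-(max (d'/2 - θ) 0)) +
            (if d'/2 = θ then Real.log (1 + r⁻¹) else 0)) := by
  have hd0 : (0:ℝ) < d' := by linarith
  have hq : (0:ℝ) < 2/d' := by positivity
  have hpeq : 2*θ/d' = 1 := by rw [hcase]; field_simp
  have he : (-1:ℝ) < 1/d' - 1 := by
    have : (0:ℝ) < 1/d' := by positivity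
    linarith
  have hΓ : 0 < Real.Gamma (1/2 : ℝ) := Real.Gamma_pos_of_pos (by norm_num)
  obtain ⟨K, hKdef⟩ : ∃ K : ℝ, K = c ^ (-(1/2) : ℝ) * (1/(2/d')) * Real.Gamma (1/2) :=
    ⟨_, rfl⟩
  have hK : 0 < K := by rw [hKdef]; positivity
  have hlog2 : (0:ℝ) < Real.log 2 := Real.log_pos one_lt_two
  refine ⟨c ^ (-θ) * ((1 + K)/Real.log 2 + d'/2), by positivity, ?_⟩
  intro r hr hr1
  have hb : 0 < c * r := mul_pos hc hr
  have hIntg0 : IntegrableOn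
      (fun x : ℝ => x ^ (1/d' - 1) * Real.exp (-(c*r) * x ^ (2/d'))) (Set.Ioi 0) :=
    aux_integrable hq he hb
  have hIvalg := integral_rpow_mul_exp_neg_mul_rpow hq he hb
  have hexp2 : -(1/d' - 1 + 1)/(2/d') = -(1/2 : ℝ) := by field_simp; ring
  have hexp3 : (1/d' - 1 + 1)/(2/d') = (1/2 : ℝ) := by field_simp; ring
  rw [hexp2, hexp3] at hIvalg
  obtain ⟨T, hTdef⟩ : ∃ T : ℝ, T = r ^ (-(d'/2)) := ⟨_, rfl⟩
  have hT1 : 1 ≤ T := hTdef ▸ Real.one_le_rpow_of_pos_of_le_one_of_nonpos hr hr1 (by linarith)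
  have hT0 : (0:ℝ) < T := lt_of_lt_of_le one_pos hT1
  have hcont : ContinuousOn
      (fun x : ℝ => x ^ (-(2*θ/d')) * Real.exp (-(c*r) * x ^ (2/d'))) (Set.Ioi 1) := by
    intro x hx
    have hx0 : x ≠ 0 := by
      have : (1:ℝ) < x := hx
      positivity
    exact ((Real.continuousAt_rpow_const x _ (Or.inl hx0)).mul
      (Real.continuous_exp.continuousAt.comp
        ((Real.continuousAt_rpow_const x _ (Or.inl hx0)).const_mul (-(c*r))))).continuousWithinAt
  have hfg : ∀ x : ℝ, 1 ≤ x →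
      x ^ (-(2*θ/d')) * Real.exp (-(c*r) * x ^ (2/d'))
        ≤ x ^ (1/d' - 1) * Real.exp (-(c*r) * x ^ (2/d')) := by
    intro x hx
    apply mul_le_mul_of_nonneg_right _ (Real.exp_pos _).le
    rw [hpeq]
    exact Real.rpow_le_rpow_of_exponent_le hx (by
      have : (0:ℝ) < 1/d' := by positivity
      linarith)
  have hInt1 : IntegrableOn
      (fun x : ℝ => x ^ (-(2*θ/d')) * Real.exp (-(c*r) * x ^ (2/d'))) (Set.Ioi 1) := by
    apply Integrable.mono (hIntg0.mono_set (Ioi_subset_Ioi zero_le_one))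
      (hcont.aestronglyMeasurable measurableSet_Ioi)
    filter_upwards [ae_restrict_mem measurableSet_Ioi] with x hx
    have hx1 : (1:ℝ) < x := hx
    have hx0 : (0:ℝ) < x := by linarith
    rw [Real.norm_eq_abs, Real.norm_eq_abs, abs_of_nonneg (by positivity),
      abs_of_nonneg (by positivity)]
    exact hfg x hx1.le
  have hkey := aux_key d' c θ hd0 hc hθ lam hpos hlow r hr hInt1
  have hsplit : (∫ x in Set.Ioi (1:ℝ), x ^ (-(2*θ/d')) * Real.exp (-(c*r) * x ^ (2/d')))
      = (∫ x in Set.Ioc (1:ℝ) T, x ^ (-(2*θ/d')) * Real.exp (-(c*r) * x ^ (2/d')))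
        + ∫ x in Set.Ioi T, x ^ (-(2*θ/d')) * Real.exp (-(c*r) * x ^ (2/d')) := by
    rw [← Ioc_union_Ioi_eq_Ioi hT1]
    exact setIntegral_union Ioc_disjoint_Ioi_same measurableSet_Ioi
      (hInt1.mono_set (fun x hx => hx.1)) (hInt1.mono_set (Ioi_subset_Ioi hT1))
  have hInvInt : IntegrableOn (fun x : ℝ => x⁻¹) (Set.Ioc 1 T) := by
    have h1 : ∀ x : ℝ, x ∈ Set.uIcc (1:ℝ) T → x ≠ 0 := by
      intro x hx
      rw [Set.uIcc_of_le hT1] at hx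
      have : (1:ℝ) ≤ x := hx.1
      positivity
    exact (intervalIntegral.intervalIntegrable_inv h1 continuousOn_id).1
  have hb1 : (∫ x in Set.Ioc (1:ℝ) T, x ^ (-(2*θ/d')) * Real.exp (-(c*r) * x ^ (2/d')))
      ≤ ∫ x in Set.Ioc (1:ℝ) T, x⁻¹ := by
    apply setIntegral_mono_on (hInt1.mono_set (fun x hx => hx.1)) hInvInt measurableSet_Ioc
    intro x hx
    have hx1 : (1:ℝ) < x := hx.1
    have hx0 : (0:ℝ) < x := by linarith
    calc x ^ (-(2*θ/d')) * Real.exp (-(c*r) * x ^ (2/d'))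
        ≤ x ^ (-(2*θ/d')) * 1 := by
          apply mul_le_mul_of_nonneg_left _ (Real.rpow_nonneg hx0.le _)
          apply Real.exp_le_one_iff.mpr
          have : 0 ≤ (c*r) * x ^ (2/d') := by positivity
          linarith
      _ = x⁻¹ := by rw [mul_one, hpeq, Real.rpow_neg_one]
  have hlogT : (∫ x in Set.Ioc (1:ℝ) T, x⁻¹) = Real.log T := by
    rw [← intervalIntegral.integral_of_le hT1, integral_inv_of_pos one_pos hT0, div_one]
  have hlogT2 : Real.log T = (d'/2) * Real.log r⁻¹ := by
    rw [hTdef, Real.log_rpow hr, Real.log_inv]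
    ring
  have hloglog : Real.log r⁻¹ ≤ Real.log (1 + r⁻¹) :=
    Real.log_le_log (by positivity) (by linarith)
  have hgnn : (fun _ : ℝ => (0:ℝ)) ≤ᵐ[volume.restrict (Set.Ioi 0)]
      fun x : ℝ => x ^ (1/d' - 1) * Real.exp (-(c*r) * x ^ (2/d')) := by
    filter_upwards [ae_restrict_mem measurableSet_Ioi] with x hx
    have hx0 : (0:ℝ) < x := hx
    positivity
  have hb2 : (∫ x in Set.Ioi T, x ^ (-(2*θ/d')) * Real.exp (-(c*r) * x ^ (2/d'))) ≤ K := by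
    have hstep1 : (∫ x in Set.Ioi T, x ^ (-(2*θ/d')) * Real.exp (-(c*r) * x ^ (2/d')))
        ≤ ∫ x in Set.Ioi T,
            T ^ (-(1/d')) * (x ^ (1/d' - 1) * Real.exp (-(c*r) * x ^ (2/d'))) := by
      apply setIntegral_mono_on (hInt1.mono_set (Ioi_subset_Ioi hT1))
        ((hIntg0.mono_set (Ioi_subset_Ioi hT0.le)).const_mul _) measurableSet_Ioi
      intro x hx
      have hxT : T < x := hx
      have hx0 : (0:ℝ) < x := lt_trans hT0 hxT
      have h1 : x ^ (-(2*θ/d')) = x ^ (1/d' - 1) * x ^ (-(1/d')) := by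
        rw [hpeq, ← Real.rpow_add hx0]
        congr 1
        ring
      have h2 : x ^ (-(1/d')) ≤ T ^ (-(1/d')) :=
        Real.rpow_le_rpow_of_nonpos hT0 hxT.le (by
          have : (0:ℝ) < 1/d' := by positivity
          linarith)
      calc x ^ (-(2*θ/d')) * Real.exp (-(c*r) * x ^ (2/d'))
          = x ^ (-(1/d')) * (x ^ (1/d' - 1) * Real.exp (-(c*r) * x ^ (2/d'))) := by
            rw [h1]; ring
        _ ≤ T ^ (-(1/d')) * (x ^ (1/d' - 1) * Real.exp (-(c*r) * x ^ (2/d'))) := by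
            apply mul_le_mul_of_nonneg_right h2
            positivity
    have hstep2 : (∫ x in Set.Ioi T,
          T ^ (-(1/d')) * (x ^ (1/d' - 1) * Real.exp (-(c*r) * x ^ (2/d'))))
        = T ^ (-(1/d')) * ∫ x in Set.Ioi T,
            x ^ (1/d' - 1) * Real.exp (-(c*r) * x ^ (2/d')) := integral_const_mul _ _
    have hstep3 : (∫ x in Set.Ioi T, x ^ (1/d' - 1) * Real.exp (-(c*r) * x ^ (2/d')))
        ≤ ∫ x in Set.Ioi (0:ℝ), x ^ (1/d' - 1) * Real.exp (-(c*r) * x ^ (2/d')) :=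
      setIntegral_mono_set hIntg0 hgnn
        (HasSubset.Subset.eventuallyLE (Ioi_subset_Ioi hT0.le))
    have hTpow : T ^ (-(1/d')) = r ^ ((1:ℝ)/2) := by
      rw [hTdef, ← Real.rpow_mul hr.le]
      congr 1
      field_simp
    have hcr : (c*r) ^ (-(1/2):ℝ) = c ^ (-(1/2):ℝ) * r ^ (-(1/2):ℝ) :=
      Real.mul_rpow hc.le hr.le
    have hrr : r ^ ((1:ℝ)/2) * r ^ (-(1/2):ℝ) = 1 := by
      rw [← Real.rpow_add hr]
      norm_num
    calc (∫ x in Set.Ioi T, x ^ (-(2*θ/d')) * Real.exp (-(c*r) * x ^ (2/d')))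
        ≤ T ^ (-(1/d')) * ∫ x in Set.Ioi T,
            x ^ (1/d' - 1) * Real.exp (-(c*r) * x ^ (2/d')) := by
          rw [← hstep2]; exact hstep1
      _ ≤ T ^ (-(1/d')) * ∫ x in Set.Ioi (0:ℝ),
            x ^ (1/d' - 1) * Real.exp (-(c*r) * x ^ (2/d')) := by
          apply mul_le_mul_of_nonneg_left hstep3 (Real.rpow_nonneg hT0.le _)
      _ = r ^ ((1:ℝ)/2) * ((c*r) ^ (-(1/2):ℝ) * (1/(2/d')) * Real.Gamma (1/2)) := by
          rw [hIvalg, hTpow]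
      _ = K := by
          rw [hKdef, hcr]
          calc r ^ ((1:ℝ)/2) * (c ^ (-(1/2):ℝ) * r ^ (-(1/2):ℝ) * (1/(2/d')) * Real.Gamma (1/2))
              = (r ^ ((1:ℝ)/2) * r ^ (-(1/2):ℝ)) *
                  (c ^ (-(1/2):ℝ) * (1/(2/d')) * Real.Gamma (1/2)) := by ring
            _ = c ^ (-(1/2):ℝ) * (1/(2/d')) * Real.Gamma (1/2) := by rw [hrr, one_mul]
  have h1r : (1:ℝ) ≤ r⁻¹ := by
    have := inv_anti₀ hr hr1
    rwa [inv_one] at this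
  have hL2 : Real.log 2 ≤ Real.log (1 + r⁻¹) :=
    Real.log_le_log two_pos (by linarith)
  have hLpos : 0 < Real.log (1 + r⁻¹) := lt_of_lt_of_le hlog2 hL2
  have hItot : (∫ x in Set.Ioi (1:ℝ), x ^ (-(2*θ/d')) * Real.exp (-(c*r) * x ^ (2/d')))
      ≤ (d'/2) * Real.log (1 + r⁻¹) + K := by
    rw [hsplit]
    have hA : (∫ x in Set.Ioc (1:ℝ) T, x ^ (-(2*θ/d')) * Real.exp (-(c*r) * x ^ (2/d')))
        ≤ (d'/2) * Real.log (1 + r⁻¹) := by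
      calc (∫ x in Set.Ioc (1:ℝ) T, x ^ (-(2*θ/d')) * Real.exp (-(c*r) * x ^ (2/d')))
          ≤ Real.log T := by rw [← hlogT]; exact hb1
        _ = (d'/2) * Real.log r⁻¹ := hlogT2
        _ ≤ (d'/2) * Real.log (1 + r⁻¹) :=
            mul_le_mul_of_nonneg_left hloglog (by linarith)
    linarith
  rw [if_pos hcase.symm, show d'/2 - θ = 0 by rw [hcase]; ring, max_self, neg_zero,
    Real.rpow_zero]
  have hcθ : (0:ℝ) < c ^ (-θ) := Real.rpow_pos_of_pos hc _
  have hfinal : c ^ (-θ) * (1 + ((d'/2) * Real.log (1 + r⁻¹) + K))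
      ≤ c ^ (-θ) * ((1 + K)/Real.log 2 + d'/2) * (1 + Real.log (1 + r⁻¹)) := by
    have hstep : 1 + K ≤ (1 + K)/Real.log 2 * Real.log (1 + r⁻¹) := by
      have h2 : (1 + K)/Real.log 2 * Real.log 2 ≤ (1 + K)/Real.log 2 * Real.log (1 + r⁻¹) :=
        mul_le_mul_of_nonneg_left hL2 (by positivity)
      rw [div_mul_cancel₀ _ (ne_of_gt hlog2)] at h2
      exact h2
    have hd2 : (0:ℝ) ≤ d'/2 := by linarith
    have generic : ∀ A B D L K' : ℝ, 0 < A → 0 ≤ B → 0 ≤ D → 0 ≤ L → (1 + K' ≤ B * L) →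
        A * (1 + (D * L + K')) ≤ A * (B + D) * (1 + L) := by
      intro A B D L K' h1 h2 h3 h4 h5
      have h6 := mul_le_mul_of_nonneg_left h5 h1.le
      have h7 : 0 ≤ A * B := mul_nonneg h1.le h2
      have h8 : 0 ≤ A * D := mul_nonneg h1.le h3
      have h9 : 0 ≤ A * D * L := mul_nonneg h8 h4
      nlinarith [h6, h7, h8, h9]
    exact generic (c ^ (-θ)) ((1 + K)/Real.log 2) (d'/2) (Real.log (1 + r⁻¹)) K
      hcθ (by positivity) hd2 hLpos.le hstep
  calc (∑' i : ℕ, lam (i+1) ^ (-θ) * Real.exp (-(lam (i+1) * r)))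
      ≤ c ^ (-θ) * (1 + ∫ x in Set.Ioi (1:ℝ),
          x ^ (-(2*θ/d')) * Real.exp (-(c*r) * x ^ (2/d'))) := hkey
    _ ≤ c ^ (-θ) * (1 + ((d'/2) * Real.log (1 + r⁻¹) + K)) := by
        apply mul_le_mul_of_nonneg_left _ (Real.rpow_nonneg hc.le _)
        linarith
    _ ≤ c ^ (-θ) * ((1 + K)/Real.log 2 + d'/2) * (1 + Real.log (1 + r⁻¹)) := hfinal

set_option maxHeartbeats 1000000 in
lemma aux_caseB (d' c θ : ℝ) (hd' : 1 ≤ d') (hc : 0 < c) (hθ : 0 ≤ θ)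
    (lam : ℕ → ℝ) (hpos : ∀ i : ℕ, 1 ≤ i → 0 < lam i)
    (hlow : ∀ i : ℕ, 1 ≤ i → c * (i : ℝ) ^ (2/d') ≤ lam i)
    (hcase : d'/2 < θ) :
    ∃ C : ℝ, 0 < C ∧ ∀ r : ℝ, 0 < r → r ≤ 1 →
      (∑' i : ℕ, lam (i+1) ^ (-θ) * Real.exp (-(lam (i+1) * r)))
        ≤ C * (r ^ (-(max (d'/2 - θ) 0)) +
            (if d'/2 = θ then Real.log (1 + r⁻¹) else 0)) := by
  have hd0 : (0:ℝ) < d' := by linarith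
  have hq : (0:ℝ) < 2/d' := by positivity
  have hp1 : (1:ℝ) < 2*θ/d' := by rw [lt_div_iff₀ hd0]; linarith
  have hp1' : (0:ℝ) < 2*θ/d' - 1 := by linarith
  refine ⟨c ^ (-θ) * (1 + 1/(2*θ/d' - 1)), by positivity, ?_⟩
  intro r hr hr1
  have hIntp : IntegrableOn (fun x : ℝ => x ^ (-(2*θ/d'))) (Set.Ioi 1) :=
    integrableOn_Ioi_rpow_of_lt (by linarith) one_pos
  have hIvalp : (∫ x in Set.Ioi (1:ℝ), x ^ (-(2*θ/d'))) = 1/(2*θ/d' - 1) := by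
    rw [integral_Ioi_rpow_of_lt (by linarith) one_pos, Real.one_rpow]
    have hne : 2*θ/d' - 1 ≠ 0 := ne_of_gt hp1'
    have hne2 : -(2*θ/d') + 1 ≠ 0 := by intro h; apply hne; linarith
    field_simp
    rw [show -(2*θ) + d' = -(2*θ - d') by ring, div_neg, neg_neg]
  have hcont : ContinuousOn
      (fun x : ℝ => x ^ (-(2*θ/d')) * Real.exp (-(c*r) * x ^ (2/d'))) (Set.Ioi 1) := by
    intro x hx
    have hx0 : x ≠ 0 := by
      have : (1:ℝ) < x := hx
      positivity
    exact ((Real.continuousAt_rpow_const x _ (Or.inl hx0)).mul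
      (Real.continuous_exp.continuousAt.comp
        ((Real.continuousAt_rpow_const x _ (Or.inl hx0)).const_mul (-(c*r))))).continuousWithinAt
  have hInt1 : IntegrableOn
      (fun x : ℝ => x ^ (-(2*θ/d')) * Real.exp (-(c*r) * x ^ (2/d'))) (Set.Ioi 1) := by
    apply Integrable.mono hIntp (hcont.aestronglyMeasurable measurableSet_Ioi)
    filter_upwards [ae_restrict_mem measurableSet_Ioi] with x hx
    have hx1 : (1:ℝ) < x := hx
    have hx0 : (0:ℝ) < x := by linarith
    rw [Real.norm_eq_abs, Real.norm_eq_abs, abs_of_nonneg (by positivity),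
      abs_of_nonneg (Real.rpow_nonneg hx0.le _)]
    calc x ^ (-(2*θ/d')) * Real.exp (-(c*r) * x ^ (2/d'))
        ≤ x ^ (-(2*θ/d')) * 1 := by
          apply mul_le_mul_of_nonneg_left _ (Real.rpow_nonneg hx0.le _)
          apply Real.exp_le_one_iff.mpr
          have : 0 ≤ (c*r) * x ^ (2/d') := by positivity
          linarith
      _ = x ^ (-(2*θ/d')) := mul_one _
  have hkey := aux_key d' c θ hd0 hc hθ lam hpos hlow r hr hInt1
  have hbound : (∫ x in Set.Ioi (1:ℝ), x ^ (-(2*θ/d')) * Real.exp (-(c*r) * x ^ (2/d')))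
      ≤ ∫ x in Set.Ioi (1:ℝ), x ^ (-(2*θ/d')) := by
    apply setIntegral_mono_on hInt1 hIntp measurableSet_Ioi
    intro x hx
    have hx1 : (1:ℝ) < x := hx
    have hx0 : (0:ℝ) < x := by linarith
    calc x ^ (-(2*θ/d')) * Real.exp (-(c*r) * x ^ (2/d'))
        ≤ x ^ (-(2*θ/d')) * 1 := by
          apply mul_le_mul_of_nonneg_left _ (Real.rpow_nonneg hx0.le _)
          apply Real.exp_le_one_iff.mpr
          have : 0 ≤ (c*r) * x ^ (2/d') := by positivity
          linarith
      _ = x ^ (-(2*θ/d')) := mul_one _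
  rw [max_eq_right (by linarith : d'/2 - θ ≤ 0),
    if_neg (show ¬ d'/2 = θ by intro h; linarith), neg_zero, Real.rpow_zero, add_zero, mul_one]
  calc (∑' i : ℕ, lam (i+1) ^ (-θ) * Real.exp (-(lam (i+1) * r)))
      ≤ c ^ (-θ) * (1 + ∫ x in Set.Ioi (1:ℝ),
          x ^ (-(2*θ/d')) * Real.exp (-(c*r) * x ^ (2/d'))) := hkey
    _ ≤ c ^ (-θ) * (1 + 1/(2*θ/d' - 1)) := by
        apply mul_le_mul_of_nonneg_left _ (Real.rpow_nonneg hc.le _)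
        rw [← hIvalp]
        linarith

/-- Eigenvalue series bound: if `λ_i ≥ c i^{2/d'}` for `i ≥ 1` (with `λ` positive and
nondecreasing), `d' ≥ 1` and `θ ≥ 0`, then there is `C > 0` such that for all `r ∈ (0,1]`,
`∑_{i≥1} λ_i^{-θ} e^{-λ_i r} ≤ C (r^{-(d'/2-θ)⁺} + 1_{d'/2=θ} log(1+r⁻¹))`. -/
theorem stmt2 (d' c θ : ℝ) (hd' : 1 ≤ d') (hc : 0 < c) (hθ : 0 ≤ θ)
    (lam : ℕ → ℝ) (hpos : ∀ i : ℕ, 1 ≤ i → 0 < lam i)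
    (hmono : ∀ i j : ℕ, 1 ≤ i → i ≤ j → lam i ≤ lam j)
    (hlow : ∀ i : ℕ, 1 ≤ i → c * (i : ℝ) ^ (2/d') ≤ lam i) :
    ∃ C : ℝ, 0 < C ∧ ∀ r : ℝ, 0 < r → r ≤ 1 →
      (∑' i : ℕ, lam (i+1) ^ (-θ) * Real.exp (-(lam (i+1) * r)))
        ≤ C * (r ^ (-(max (d'/2 - θ) 0)) +
            (if d'/2 = θ then Real.log (1 + r⁻¹) else 0)) := by
  rcases lt_trichotomy θ (d'/2) with hcase | hcase | hcase
  · exact aux_caseA d' c θ hd' hc hθ lam hpos hlow hcase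
  · exact aux_caseC d' c θ hd' hc hθ lam hpos hlow hcase
  · exact aux_caseB d' c θ hd' hc hθ lam hpos hlow hcase
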